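/- Let L be a finite meet-semilattice, let S = {x₁,…,x_n} ⊆ L be a factor-closed subset (i.e., if x ∈ S and y ∈ L with y ≤ x, then y ∈ S), let R be a commutative ring, let k ≥ 2, let 𝓕 : (S_n)^{k-2} → R be any map, and for each x ∈ S let F_x : L → R be a function. Define f_x(z) = ∑_{y ∈ S} μ(y,z) F_x(y) for z ∈ S, where μ is the Möbius function of L. Then Det_𝓕( (F_{x_{i₁}}(x_{i₁} ∧ x_{i₂} ∧ ⋯ ∧ x_{i_k}))_{1≤i₁,…,i_k≤n} ) = 𝓕(Id,…,Id) · ∏_{x ∈ S} f_x(x). -/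

import Mathlib

/-- The `𝓕`-determinant of a `k`-dimensional hypermatrix (`k = m + 2`), where the first two
indices are explicit and the remaining `m = k - 2` indices are gathered in a tuple:
`Det_𝓕(M) = ∑_{(σ₂,σ₃,…,σ_k)} sign(σ₂) ⋅ 𝓕(σ₃,…,σ_k) ⋅ ∏_i M_{i,σ₂(i),…,σ_k(i)}`. -/
def DetF {R : Type*} [CommRing R] {n m : ℕ}
    (𝓕 : (Fin m → Equiv.Perm (Fin n)) → R)
    (M : Fin n → Fin n → (Fin m → Fin n) → R) : R :=
  ∑ σ₂ : Equiv.Perm (Fin n), ∑ τ : Fin m → Equiv.Perm (Fin n),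
    ((Equiv.Perm.sign σ₂ : ℤ) : R) * 𝓕 τ * ∏ i : Fin n, M i (σ₂ i) (fun j => τ j i)

/-- The meet `a ⊓ v 0 ⊓ v 1 ⊓ ⋯` of an element `a` with a tuple `v` of elements of a
meet-semilattice. -/
def meetAll {L : Type*} [SemilatticeInf L] {m : ℕ} (a : L) (v : Fin m → L) : L :=
  (List.ofFn v).foldr (· ⊓ ·) a

open Finset

open Classical in
noncomputable def indLe {L : Type*} [Preorder L] {R : Type*} [CommRing R] (a b : L) : R :=
  if a ≤ b then 1 else 0

lemma indLe_of_le {L : Type*} [Preorder L] {R : Type*} [CommRing R] {a b : L} (h : a ≤ b) :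
    (indLe a b : R) = 1 := by simp [indLe, h]

lemma indLe_of_not_le {L : Type*} [Preorder L] {R : Type*} [CommRing R] {a b : L} (h : ¬ a ≤ b) :
    (indLe a b : R) = 0 := by simp [indLe, h]

lemma le_meetAll_iff {L : Type*} [SemilatticeInf L] {m : ℕ} (w a : L) (v : Fin m → L) :
    w ≤ meetAll a v ↔ w ≤ a ∧ ∀ r, w ≤ v r := by
  rw [meetAll]
  have : ∀ l : List L, w ≤ l.foldr (· ⊓ ·) a ↔ w ≤ a ∧ ∀ b ∈ l, w ≤ b := by
    intro l
    induction l with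
    | nil => simp
    | cons hd tl ih => simp [le_inf_iff, ih]; tauto
  rw [this]
  simp [List.forall_mem_ofFn_iff]

lemma meetAll_le {L : Type*} [SemilatticeInf L] {m : ℕ} (a : L) (v : Fin m → L) :
    meetAll a v ≤ a := by
  rw [meetAll]
  induction (List.ofFn v) with
  | nil => simp
  | cons hd tl ih => exact le_trans inf_le_right ih

lemma perm_eq_one_of_le {L : Type*} [PartialOrder L] {n : ℕ} {x : Fin n → L}
    (hinj : Function.Injective x) (σ : Equiv.Perm (Fin n)) (h : ∀ i, x i ≤ x (σ i)) : σ = 1 := by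
  have key : ∀ (k : ℕ) (i : Fin n), x i ≤ x ((σ ^ k) i) := by
    intro k
    induction k with
    | zero => simp
    | succ k ih =>
      intro i
      calc x i ≤ x ((σ ^ k) i) := ih i
        _ ≤ x (σ ((σ ^ k) i)) := h _
        _ = x ((σ ^ (k + 1)) i) := by rw [pow_succ']; rfl
  have hrev : ∀ i, x (σ i) ≤ x i := by
    intro i
    have h1 := key (orderOf σ - 1) (σ i)
    have h2 : (σ ^ (orderOf σ - 1)) (σ i) = (σ ^ orderOf σ) i := by
      rw [← Nat.sub_add_cancel (Nat.one_le_iff_ne_zero.mpr (orderOf_pos σ).ne')]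
      rw [pow_succ]
      rfl
    rw [h2, pow_orderOf_eq_one] at h1
    simpa using h1
  refine Equiv.ext fun i => ?_
  exact (hinj (le_antisymm (h i) (hrev i))).symm

lemma perm_eq_one_of_le' {L : Type*} [PartialOrder L] {n : ℕ} {x : Fin n → L}
    (hinj : Function.Injective x) (σ : Equiv.Perm (Fin n)) (h : ∀ i, x (σ i) ≤ x i) : σ = 1 := by
  have : σ⁻¹ = 1 := by
    apply perm_eq_one_of_le hinj
    intro i
    have := h (σ⁻¹ i)
    rwa [Equiv.Perm.inv_def, Equiv.apply_symm_apply] at this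
  rwa [inv_eq_one] at this

lemma delta_sum {L R : Type*} [Fintype L] [DecidableEq L] [SemilatticeInf L]
    [LocallyFiniteOrder L] [CommRing R]
    {n : ℕ} (x : Fin n → L) (hinj : Function.Injective x)
    (hfc : ∀ (i : Fin n) (w : L), w ≤ x i → ∃ j : Fin n, x j = w)
    (j' l : Fin n) :
    ∑ j : Fin n, indLe (x j) (x l) * IncidenceAlgebra.mu R (x j') (x j) =
      if j' = l then 1 else 0 := by
  classical
  have h1 : ∑ j : Fin n, indLe (x j) (x l) * IncidenceAlgebra.mu R (x j') (x j) =
      ∑ z ∈ Finset.univ.image x, indLe z (x l) * IncidenceAlgebra.mu R (x j') z := by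
    rw [Finset.sum_image (fun a _ b _ hab => hinj hab)]
  rw [h1]
  have h2 : ∑ z ∈ Finset.univ.image x, indLe z (x l) * IncidenceAlgebra.mu R (x j') z =
      ∑ z ∈ Finset.Icc (x j') (x l), indLe z (x l) * IncidenceAlgebra.mu R (x j') z := by
    refine (Finset.sum_subset ?_ ?_).symm
    · intro z hz
      rw [Finset.mem_Icc] at hz
      obtain ⟨j, hj⟩ := hfc l z hz.2
      exact Finset.mem_image.2 ⟨j, Finset.mem_univ _, hj⟩
    · intro z _ hz
      rw [Finset.mem_Icc] at hz
      push_neg at hz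
      by_cases hle : z ≤ x l
      · rw [IncidenceAlgebra.apply_eq_zero_of_not_le (fun h => hz h hle), mul_zero]
      · rw [indLe_of_not_le hle, zero_mul]
  rw [h2]
  have h3 : ∀ z ∈ Finset.Icc (x j') (x l),
      indLe z (x l) * IncidenceAlgebra.mu R (x j') z = IncidenceAlgebra.mu R (x j') z := by
    intro z hz
    rw [Finset.mem_Icc] at hz
    rw [indLe_of_le hz.2, one_mul]
  rw [Finset.sum_congr rfl h3, IncidenceAlgebra.sum_Icc_mu_right]
  simp [hinj.eq_iff]

lemma mobius_inv {L R : Type*} [Fintype L] [DecidableEq L] [SemilatticeInf L]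
    [LocallyFiniteOrder L] [CommRing R]
    {n : ℕ} (x : Fin n → L) (hinj : Function.Injective x)
    (hfc : ∀ (i : Fin n) (w : L), w ≤ x i → ∃ j : Fin n, x j = w)
    (F : Fin n → L → R) (f : Fin n → L → R)
    (hf : ∀ i v, f i v = ∑ j : Fin n, IncidenceAlgebra.mu R (x j) v * F i (x j))
    (i l : Fin n) :
    F i (x l) = ∑ j : Fin n, indLe (x j) (x l) * f i (x j) := by
  have : ∑ j : Fin n, indLe (x j) (x l) * f i (x j) =
      ∑ j' : Fin n, (∑ j : Fin n, indLe (x j) (x l) * IncidenceAlgebra.mu R (x j') (x j)) *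
        F i (x j') := by
    simp_rw [hf, Finset.mul_sum, Finset.sum_mul]
    rw [Finset.sum_comm]
    apply Finset.sum_congr rfl
    intro j' _
    apply Finset.sum_congr rfl
    intro j _
    ring
  rw [this]
  simp_rw [delta_sum x hinj hfc, ite_mul, one_mul, zero_mul]
  simp

/-- let `L` be a finite meet-semilattice, `S = {x₁,…,x_n} ⊆ L` a factor-closed
subset, `k = m + 2 ≥ 2`, `𝓕 : (S_n)^{k-2} → R`, `F_x : L → R` for each `x ∈ S`, and
`f_x(v) = ∑_{y ∈ S} μ(y,v) F_x(y)` with `μ` the Möbius function of `L`.  Then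
`Det_𝓕((F_{x_{i₁}}(x_{i₁} ∧ ⋯ ∧ x_{i_k}))) = 𝓕(Id,…,Id) ⋅ ∏_{x ∈ S} f_x(x)`. -/
theorem detF_factor_closed {L R : Type*} [Fintype L] [DecidableEq L] [SemilatticeInf L]
    [LocallyFiniteOrder L] [CommRing R]
    {n m : ℕ} (x : Fin n → L) (hinj : Function.Injective x)
    (hfc : ∀ (i : Fin n) (w : L), w ≤ x i → ∃ j : Fin n, x j = w)
    (𝓕 : (Fin m → Equiv.Perm (Fin n)) → R)
    (F : Fin n → L → R)
    (f : Fin n → L → R)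
    (hf : ∀ i v, f i v = ∑ j : Fin n, IncidenceAlgebra.mu R (x j) v * F i (x j)) :
    DetF 𝓕 (fun i₁ i₂ t => F i₁ (meetAll (x i₁ ⊓ x i₂) (fun j => x (t j)))) =
      𝓕 (fun _ => 1) * ∏ i : Fin n, f i (x i) := by
  classical
  -- rewrite of a single entry
  have entry : ∀ (i b : Fin n) (t : Fin m → Fin n),
      F i (meetAll (x i ⊓ x b) (fun j => x (t j))) =
      ∑ j : Fin n, indLe (x j) (x b) *
        (indLe (x j) (x i) * (∏ r, indLe (x j) (x (t r))) * f i (x j)) := by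
    intro i b t
    obtain ⟨l, hl⟩ := hfc i (meetAll (x i ⊓ x b) (fun j => x (t j)))
      (le_trans (meetAll_le _ _) inf_le_left)
    rw [← hl, mobius_inv x hinj hfc F f hf i l]
    refine Finset.sum_congr rfl fun j _ => ?_
    have hiff : x j ≤ x l ↔ (x j ≤ x i ∧ x j ≤ x b) ∧ ∀ r, x j ≤ x (t r) := by
      rw [hl, le_meetAll_iff, le_inf_iff]
    by_cases h : x j ≤ x l
    · have h' := hiff.mp h
      rw [indLe_of_le h, indLe_of_le h'.1.1, indLe_of_le h'.1.2, one_mul]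
      rw [Finset.prod_congr rfl fun r _ => indLe_of_le (h'.2 r), Finset.prod_const_one]
      ring
    · rw [indLe_of_not_le h, zero_mul]
      by_cases h2 : x j ≤ x b
      · by_cases h1 : x j ≤ x i
        · have h3 : ∃ r, ¬ x j ≤ x (t r) := by
            by_contra hno
            push_neg at hno
            exact h (hiff.mpr ⟨⟨h1, h2⟩, hno⟩)
          obtain ⟨r, hr⟩ := h3
          have hz : (∏ r : Fin m, (indLe (x j) (x (t r)) : R)) = 0 :=
            Finset.prod_eq_zero (Finset.mem_univ r) (indLe_of_not_le hr)
          rw [hz]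
          ring
        · rw [indLe_of_not_le h1]
          ring
      · rw [indLe_of_not_le h2]
        ring
  -- the two factors
  set P : (Fin n → Fin n) → R := fun c =>
    ∑ σ₂ : Equiv.Perm (Fin n), ((Equiv.Perm.sign σ₂ : ℤ) : R) *
      ∏ i : Fin n, indLe (x (c i)) (x (σ₂ i)) with hP
  set Q : (Fin n → Fin n) → R := fun c =>
    ∑ τ : Fin m → Equiv.Perm (Fin n), 𝓕 τ *
      ∏ i : Fin n, (indLe (x (c i)) (x i) * (∏ r, indLe (x (c i)) (x (τ r i))) *
        f i (x (c i))) with hQ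
  have step1 : DetF 𝓕 (fun i₁ i₂ t => F i₁ (meetAll (x i₁ ⊓ x i₂) (fun j => x (t j)))) =
      ∑ c : Fin n → Fin n, P c * Q c := by
    unfold DetF
    have main1 : ∀ (σ₂ : Equiv.Perm (Fin n)) (τ : Fin m → Equiv.Perm (Fin n)),
        (∏ i : Fin n, F i (meetAll (x i ⊓ x (σ₂ i)) (fun j => x (τ j i)))) =
        ∑ c : Fin n → Fin n, (∏ i : Fin n, indLe (x (c i)) (x (σ₂ i))) *
          ∏ i : Fin n, (indLe (x (c i)) (x i) * (∏ r, indLe (x (c i)) (x (τ r i))) *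
            f i (x (c i))) := by
      intro σ₂ τ
      rw [Finset.prod_congr rfl fun i _ => entry i (σ₂ i) (fun j => τ j i)]
      rw [Fintype.prod_sum]
      exact Finset.sum_congr rfl fun c _ => Finset.prod_mul_distrib
    calc
      ∑ σ₂ : Equiv.Perm (Fin n), ∑ τ : Fin m → Equiv.Perm (Fin n),
          ((Equiv.Perm.sign σ₂ : ℤ) : R) * 𝓕 τ *
            ∏ i : Fin n, F i (meetAll (x i ⊓ x (σ₂ i)) (fun j => x (τ j i)))
        = ∑ σ₂ : Equiv.Perm (Fin n), ∑ τ : Fin m → Equiv.Perm (Fin n),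
            ∑ c : Fin n → Fin n,
            (((Equiv.Perm.sign σ₂ : ℤ) : R) * ∏ i : Fin n, indLe (x (c i)) (x (σ₂ i))) *
            (𝓕 τ * ∏ i : Fin n, (indLe (x (c i)) (x i) *
              (∏ r, indLe (x (c i)) (x (τ r i))) * f i (x (c i)))) := by
          refine Finset.sum_congr rfl fun σ₂ _ => Finset.sum_congr rfl fun τ _ => ?_
          rw [main1 σ₂ τ, Finset.mul_sum]
          exact Finset.sum_congr rfl fun c _ => by ring
      _ = ∑ c : Fin n → Fin n, ∑ σ₂ : Equiv.Perm (Fin n), ∑ τ : Fin m → Equiv.Perm (Fin n),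
            (((Equiv.Perm.sign σ₂ : ℤ) : R) * ∏ i : Fin n, indLe (x (c i)) (x (σ₂ i))) *
            (𝓕 τ * ∏ i : Fin n, (indLe (x (c i)) (x i) *
              (∏ r, indLe (x (c i)) (x (τ r i))) * f i (x (c i)))) := by
          exact (Finset.sum_congr rfl fun σ₂ _ => Finset.sum_comm).trans Finset.sum_comm
      _ = ∑ c : Fin n → Fin n, P c * Q c := by
          exact Finset.sum_congr rfl fun c _ => (Finset.sum_mul_sum _ _ _ _).symm
  rw [step1]
  rw [Finset.sum_eq_single (id : Fin n → Fin n)]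
  · -- value at c = id
    have hPid : P id = 1 := by
      rw [hP]
      beta_reduce
      refine (Finset.sum_eq_single (1 : Equiv.Perm (Fin n)) ?_ ?_).trans ?_
      · intro σ₂ _ hσ₂
        have hex : ∃ i, ¬ x i ≤ x (σ₂ i) := by
          by_contra hno
          push_neg at hno
          exact hσ₂ (perm_eq_one_of_le hinj σ₂ hno)
        obtain ⟨i₀, hi₀⟩ := hex
        have hz : (∏ i : Fin n, (indLe (x (id i)) (x (σ₂ i)) : R)) = 0 :=
          Finset.prod_eq_zero (Finset.mem_univ i₀) (indLe_of_not_le hi₀)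
        rw [hz, mul_zero]
      · intro h
        exact absurd (Finset.mem_univ _) h
      · simp [indLe]
    have hQid : Q id = 𝓕 (fun _ => 1) * ∏ i : Fin n, f i (x i) := by
      rw [hQ]
      beta_reduce
      refine (Finset.sum_eq_single (fun _ => 1 : Fin m → Equiv.Perm (Fin n)) ?_ ?_).trans ?_
      · intro τ _ hτ
        have hex : ∃ r, τ r ≠ 1 := by
          by_contra hno
          push_neg at hno
          exact hτ (funext hno)
        obtain ⟨r, hr⟩ := hex
        have hex2 : ∃ i, ¬ x i ≤ x ((τ r) i) := by
          by_contra hno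
          push_neg at hno
          exact hr (perm_eq_one_of_le hinj (τ r) hno)
        obtain ⟨i₀, hi₀⟩ := hex2
        have hz1 : (∏ r' : Fin m, (indLe (x (id i₀)) (x ((τ r') i₀)) : R)) = 0 :=
          Finset.prod_eq_zero (Finset.mem_univ r) (indLe_of_not_le hi₀)
        have hz : (∏ i : Fin n, ((indLe (x (id i)) (x i) *
            ∏ r' : Fin m, indLe (x (id i)) (x ((τ r') i))) * f i (x (id i)) : R)) = 0 := by
          refine Finset.prod_eq_zero (Finset.mem_univ i₀) ?_
          rw [hz1]
          ring
        rw [hz, mul_zero]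
      · intro h
        exact absurd (Finset.mem_univ _) h
      · congr 1
        refine Finset.prod_congr rfl fun i _ => ?_
        simp [indLe]
    rw [hPid, hQid, one_mul]
  · -- other c give zero
    intro c _ hc
    by_cases hcinj : Function.Injective c
    · -- injective: Q c = 0
      have hbij := Finite.injective_iff_bijective.mp hcinj
      have hex : ∃ i, ¬ x (c i) ≤ x i := by
        by_contra hno
        push_neg at hno
        have h1 : Equiv.ofBijective c hbij = 1 :=
          perm_eq_one_of_le' hinj (Equiv.ofBijective c hbij) (fun i => hno i)
        apply hc
        funext i
        have := congrFun (congrArg (fun (e : Equiv.Perm (Fin n)) => (e : Fin n → Fin n)) h1) i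
        simpa using this
      obtain ⟨i₀, hi₀⟩ := hex
      have hQ0 : Q c = 0 := by
        rw [hQ]
        beta_reduce
        refine Finset.sum_eq_zero fun τ _ => ?_
        have hz : (∏ i : Fin n, ((indLe (x (c i)) (x i) *
            ∏ r : Fin m, indLe (x (c i)) (x ((τ r) i))) * f i (x (c i)) : R)) = 0 := by
          refine Finset.prod_eq_zero (Finset.mem_univ i₀) ?_
          rw [indLe_of_not_le hi₀]
          ring
        rw [hz, mul_zero]
      rw [hQ0, mul_zero]
    · -- not injective: P c = 0
      obtain ⟨a, b, hab, hne⟩ := Function.not_injective_iff.mp hcinj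
      have hP0 : P c = 0 := by
        have hdet : P c = Matrix.det (Matrix.of fun p q => (indLe (x (c q)) (x p) : R)) := by
          rw [Matrix.det_apply', hP]
          beta_reduce
          exact Finset.sum_congr rfl fun σ _ => rfl
        rw [hdet]
        refine Matrix.det_zero_of_column_eq hne fun k => ?_
        show (indLe (x (c a)) (x k) : R) = indLe (x (c b)) (x k)
        rw [hab]
      rw [hP0, zero_mul]
  · intro h
    exact absurd (Finset.mem_univ _) h
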